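/- Let λ be a partition with all μ_j(λ) even, and let d ≥ 1 with d⁺ = lcm(2,d). If μ_j(λ) ≡ 0 (mod d⁺) for all j, then |λ| ≡ 0 (mod d⁺) and, writing ω_d for a primitive d-th root of unity, ω_d^{μ_1(λ) − τ_1(λ)} = (−1)^{|λ|/d}, where τ_1(λ) = (1/2)·Σ_{j odd} μ_j(λ). -/

import Mathlib

open Finset

/-- For a partition `λ` with all multiplicities even and divisible by `d⁺ = lcm(2,d)`:
`d⁺` divides `|λ|` and `ω_d^{μ_1(λ) − τ_1(λ)} = (−1)^{|λ|/d}`, where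
`τ_1(λ) = (1/2) Σ_{j odd} μ_j(λ)`. -/
theorem stmt_17 (n d : ℕ) (hd : 0 < d) (P : Nat.Partition n)
    (heven : ∀ j, Even (Multiset.count j P.parts))
    (hmod : ∀ j, Nat.lcm 2 d ∣ Multiset.count j P.parts)
    (ω : ℂ) (hω : IsPrimitiveRoot ω d) :
    Nat.lcm 2 d ∣ n ∧
      ω ^ (((Multiset.count 1 P.parts : ℕ) : ℤ) -
            (((∑ j ∈ (Finset.Icc 1 n).filter (fun j => Odd j),
                Multiset.count j P.parts) / 2 : ℕ) : ℤ)) =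
        (-1 : ℂ) ^ (n / d) := by
  classical
  set L := Nat.lcm 2 d with hLdef
  set c : ℕ → ℕ := fun j => Multiset.count j P.parts with hc
  -- n as a sum over Icc 1 n
  have hsum : n = ∑ j ∈ Finset.Icc 1 n, j * c j := by
    have hsub : P.parts.toFinset ⊆ Finset.Icc 1 n := by
      intro j hj
      have hmem : j ∈ P.parts := Multiset.mem_toFinset.mp hj
      rw [Finset.mem_Icc]
      refine ⟨P.parts_pos hmem, ?_⟩
      calc j ≤ P.parts.sum := Multiset.single_le_sum (fun x _ => Nat.zero_le x) _ hmem
        _ = n := P.parts_sum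
    calc n = P.parts.sum := P.parts_sum.symm
      _ = ∑ j ∈ P.parts.toFinset, Multiset.count j P.parts • j :=
          Finset.sum_multiset_count _
      _ = ∑ j ∈ Finset.Icc 1 n, Multiset.count j P.parts • j :=
          Finset.sum_subset hsub (fun j _ hj => by
            simp [Multiset.count_eq_zero_of_notMem
              (fun h => hj (Multiset.mem_toFinset.mpr h))])
      _ = ∑ j ∈ Finset.Icc 1 n, j * c j := by
          simp [hc, smul_eq_mul, mul_comm]
  set S := ∑ j ∈ (Finset.Icc 1 n).filter (fun j => Odd j), c j with hSdef
  have hS : L ∣ S := Finset.dvd_sum fun j _ => hmod j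
  have hn : L ∣ n := by
    rw [hsum]; exact Finset.dvd_sum fun j _ => (hmod j).mul_left j
  refine ⟨hn, ?_⟩
  have hSn : S ≤ n := by
    rw [hsum]
    calc S ≤ ∑ j ∈ (Finset.Icc 1 n).filter (fun j => Odd j), j * c j :=
        Finset.sum_le_sum fun j hj => by
          have : 1 ≤ j := (Finset.mem_Icc.mp (Finset.mem_filter.mp hj).1).1
          nlinarith [Nat.zero_le (c j)]
      _ ≤ ∑ j ∈ Finset.Icc 1 n, j * c j :=
        Finset.sum_le_sum_of_subset (Finset.filter_subset _ _)
  have hdiff : 2 * L ∣ n - S := by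
    have hZ : (2 * L : ℤ) ∣ (n : ℤ) - S := by
      have heq : (n : ℤ) - S =
          ∑ j ∈ Finset.Icc 1 n, ((j : ℤ) * c j - if Odd j then (c j : ℤ) else 0) := by
        rw [Finset.sum_sub_distrib, ← Finset.sum_filter]
        congr 1
        · exact_mod_cast hsum
        · exact_mod_cast hSdef
      rw [heq]
      refine Finset.dvd_sum fun j _ => ?_
      have hcL : (L : ℤ) ∣ (c j : ℤ) := Int.natCast_dvd_natCast.mpr (hmod j)
      rcases Nat.even_or_odd j with he | ho
      · rw [if_neg (Nat.not_odd_iff_even.mpr he), sub_zero]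
        have h2 : (2 : ℤ) ∣ (j : ℤ) := by exact_mod_cast he.two_dvd
        push_cast
        exact mul_dvd_mul h2 hcL
      · rw [if_pos ho]
        have : (j : ℤ) * c j - c j = ((j : ℤ) - 1) * c j := by ring
        rw [this]
        push_cast
        have h2 : (2 : ℤ) ∣ (j : ℤ) - 1 := by
          obtain ⟨m, hm⟩ := ho
          omega
        exact mul_dvd_mul h2 hcL
    have : ((2 * L : ℕ) : ℤ) ∣ ((n - S : ℕ) : ℤ) := by
      push_cast [Nat.cast_sub hSn]
      exact_mod_cast hZ
    exact_mod_cast this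
  have hωne : ω ≠ 0 := hω.ne_zero hd.ne'
  rcases Nat.even_or_odd d with hde | hdo
  · -- d even : L = d
    have hL : L = d := Nat.dvd_antisymm (Nat.lcm_dvd hde.two_dvd dvd_rfl) (Nat.dvd_lcm_right _ _)
    obtain ⟨e, he⟩ := hde
    have he' : d = 2 * e := by omega
    have he0 : 0 < e := by omega
    -- ω ^ e = -1
    have hωe : ω ^ e = -1 := by
      have hsq : (ω ^ e) ^ 2 = 1 := by
        rw [← pow_mul, mul_comm, ← he', hω.pow_eq_one]
      rcases sq_eq_one_iff.mp hsq with h1 | h1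
      · exact absurd h1 (hω.pow_ne_one_of_pos_of_lt he0.ne' (by omega))
      · exact h1
    obtain ⟨k, hk⟩ : d ∣ S := hL ▸ hS
    have hτ : S / 2 = e * k := by
      have hS2 : S = 2 * (e * k) := by rw [hk, he']; ring
      omega
    obtain ⟨t, ht⟩ : 2 * d ∣ n - S := by rw [← hL]; exact hdiff
    have hnd : n / d = k + 2 * t := by
      have h1 : n = S + 2 * d * t := by omega
      have : n = d * (k + 2 * t) := by rw [h1, hk]; ring
      rw [this, Nat.mul_div_cancel_left _ hd]
    have hμ : ω ^ ((Multiset.count 1 P.parts : ℕ) : ℤ) = 1 := by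
      rw [hω.zpow_eq_one_iff_dvd]
      exact_mod_cast Int.natCast_dvd_natCast.mpr (hL ▸ hmod 1)
    rw [zpow_sub₀ hωne, hμ, one_div]
    rw [show ((S / 2 : ℕ) : ℤ) = ((e * k : ℕ) : ℤ) by rw [hτ]]
    rw [zpow_natCast, pow_mul, hωe, hnd]
    rw [pow_add, pow_mul, neg_one_sq, one_pow, mul_one, ← inv_pow, inv_neg, inv_one]
  · -- d odd : L = 2 * d
    have hL : L = 2 * d := Nat.Coprime.lcm_eq_mul (Nat.coprime_two_left.mpr hdo)
    obtain ⟨k, hk⟩ : 2 * d ∣ S := hL ▸ hS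
    have hτ : S / 2 = d * k := by
      have hS2 : S = 2 * (d * k) := by rw [hk]; ring
      omega
    obtain ⟨m, hm⟩ : 2 * d ∣ n := hL ▸ hn
    have hnd : n / d = 2 * m := by
      have : n = d * (2 * m) := by rw [hm]; ring
      rw [this, Nat.mul_div_cancel_left _ hd]
    have hexp : ω ^ (((Multiset.count 1 P.parts : ℕ) : ℤ) - ((S / 2 : ℕ) : ℤ)) = 1 := by
      rw [hω.zpow_eq_one_iff_dvd]
      refine dvd_sub ?_ ?_
      · exact_mod_cast Int.natCast_dvd_natCast.mpr ((Nat.dvd_lcm_right 2 d).trans (hmod 1))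
      · rw [hτ]; exact ⟨k, by push_cast; ring⟩
    rw [hexp, hnd, pow_mul]
    simp
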